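/- Consider the game with state set K = {1,2} and payoff matrices M¹ = A¹ = [[0,0],[0,−1]], M² = A² = [[−1,0],[0,0]], and let p⁰ = (1/2, 1/2) ∈ Δ(K). Then (i) the vector φ = (0,0) belongs to NR(p⁰), and (ii) the game satisfies property NR at p⁰, witnessed by the boundary point p = (0,1) (probability 0 on state 1) and φ = (0,0). In particular, property NR at p⁰ can hold even when the game is not locally non-revealing at p⁰. -/

import Mathlib

open scoped BigOperators
open Finset

noncomputable section

/-- Value of the zero-sum matrix game with payoff matrix `M`:
`min_{t ∈ Δ(J)} max_{s ∈ Δ(I)} s M t`. -/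
def matrixValue {I J : Type*} [Fintype I] [Fintype J] (M : I → J → ℝ) : ℝ :=
  ⨅ t : (stdSimplex ℝ J), ⨆ s : (stdSimplex ℝ I),
    ∑ i, ∑ j, (s : I → ℝ) i * M i j * (t : J → ℝ) j

/-- The non-revealing value function `v^e(q)`, defined on all of `ℝ^K`. -/
def ve {K I J : Type*} [Fintype K] [Fintype I] [Fintype J]
    (M : K → I → J → ℝ) (q : K → ℝ) : ℝ :=
  matrixValue (fun i j => ∑ k, q k * M k i j)

/-- The concavification `Cav(v)(p)`: pointwise smallest concave majorant of `v` on the simplex. -/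
def cav {K : Type*} [Fintype K] (v : (K → ℝ) → ℝ) (p : K → ℝ) : ℝ :=
  sInf { y : ℝ | ∃ g : (K → ℝ) → ℝ,
    ConcaveOn ℝ (stdSimplex ℝ K) g ∧ (∀ q ∈ stdSimplex ℝ K, v q ≤ g q) ∧ y = g p }

/-- The affine parametrization `T : ℝ^{|K|-1} → ℝ^K`, `T 0 = e₁`, `T eᵢ = e_{i+1}`. -/
def Tmap (n : ℕ) (x : Fin n → ℝ) : Fin (n + 1) → ℝ :=
  Fin.cons (1 - ∑ i, x i) x

/-- The inverse of `T` on the affine hull of the simplex. -/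
def Tinv {n : ℕ} (p : Fin (n + 1) → ℝ) : Fin n → ℝ := fun i => p i.succ

/-- Pre-multiplication of the matrix `S` (linear part of `T`) by the row vector `φ`. -/
def rowS (n : ℕ) (φ : Fin (n + 1) → ℝ) : Fin n → ℝ := fun i => φ i.succ - φ 0

/-- Gradient of `f : ℝⁿ → ℝ` as a vector. -/
def grad {n : ℕ} (f : (Fin n → ℝ) → ℝ) (x : Fin n → ℝ) : Fin n → ℝ :=
  fun i => fderiv ℝ f x (Pi.single i 1)

/-- Clarke generalized gradient of `f` at `x`. -/
def clarkeGrad {n : ℕ} (f : (Fin n → ℝ) → ℝ) (x : Fin n → ℝ) : Set (Fin n → ℝ) :=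
  convexHull ℝ { L : Fin n → ℝ | ∃ u : ℕ → Fin n → ℝ,
    (∀ m, DifferentiableAt ℝ f (u m)) ∧
    Filter.Tendsto u Filter.atTop (nhds x) ∧
    Filter.Tendsto (fun m => grad f (u m)) Filter.atTop (nhds L) }

/-- The restricted superdifferential `∂*Cav(v)(p)`. -/
def restrictedSuperdiff {n : ℕ} (Cv : (Fin (n + 1) → ℝ) → ℝ) (p : Fin (n + 1) → ℝ) :
    Set (Fin n → ℝ) :=
  { w | ∀ h : Fin n → ℝ, Tmap n (Tinv p + h) ∈ stdSimplex ℝ (Fin (n + 1)) →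
      Cv (Tmap n (Tinv p + h)) ≤ Cv p + ∑ i, w i * h i }

/-- Property `NR` at `p⁰`. -/
def propNR {n : ℕ} {I J : Type*} [Fintype I] [Fintype J]
    (M : Fin (n + 1) → I → J → ℝ) (p0 : Fin (n + 1) → ℝ) : Prop :=
  ∃ p ∈ stdSimplex ℝ (Fin (n + 1)), ∃ φ : Fin (n + 1) → ℝ,
    (cav (ve M) p = ve M p ∧ ve M p = ∑ k, φ k * p k ∧
      cav (ve M) p0 = ∑ k, φ k * p0 k) ∧
    rowS n φ ∈ clarkeGrad (fun x => ve M (Tmap n x)) (Tinv p) ∧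
    rowS n φ ∈ restrictedSuperdiff (cav (ve M)) p

/-- The set `F` of feasible payoff vectors. -/
def Fset {K I J : Type*} [Fintype K] [Fintype I] [Fintype J]
    (M : K → I → J → ℝ) : Set (K → ℝ) :=
  convexHull ℝ { w : K → ℝ | ∃ i : I, ∃ j : J, w = fun k => M k i j }

/-- The set of non-revealing equilibrium payoffs `NR(p⁰)`. -/
def NRset {K I J : Type*} [Fintype K] [Fintype I] [Fintype J]
    (M : K → I → J → ℝ) (p0 : K → ℝ) : Set (K → ℝ) :=
  { φ | (∀ q ∈ stdSimplex ℝ K, ve M q ≤ ∑ k, φ k * q k) ∧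
        (∑ k, φ k * p0 k = cav (ve M) p0) ∧ φ ∈ Fset M }

/-- The game is locally non-revealing at `p`. -/
def locallyNR {K I J : Type*} [Fintype K] [Fintype I] [Fintype J]
    (M : K → I → J → ℝ) (p : K → ℝ) : Prop :=
  ∃ m : ℕ, ∃ α : Fin m → ℝ, ∃ ps : Fin m → K → ℝ,
    (∀ i, 0 < α i) ∧ (∑ i, α i = 1) ∧ (∀ i, ps i ∈ stdSimplex ℝ K) ∧
    (∑ i, α i • ps i = p) ∧ (cav (ve M) p = ∑ i, α i * ve M (ps i)) ∧
    (∃ i₀, ∀ k, 0 < ps i₀ k)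

end

noncomputable section

/-- The game of Example 3.1: `M¹ = [[0,0],[0,−1]]`, `M² = [[−1,0],[0,0]]`. -/
def Mex14 : Fin (1 + 1) → Fin 2 → Fin 2 → ℝ :=
  ![fun i j => !![(0:ℝ), 0; 0, -1] i j, fun i j => !![(-1:ℝ), 0; 0, 0] i j]

end


namespace Stmt14Aux

lemma mem_e0 : (![1,0] : Fin 2 → ℝ) ∈ stdSimplex ℝ (Fin 2) :=
  ⟨fun i => by fin_cases i <;> norm_num, by simp [Fin.sum_univ_two]⟩
lemma mem_e1 : (![0,1] : Fin 2 → ℝ) ∈ stdSimplex ℝ (Fin 2) :=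
  ⟨fun i => by fin_cases i <;> norm_num, by simp [Fin.sum_univ_two]⟩

instance : Nonempty (stdSimplex ℝ (Fin 2)) := ⟨⟨![1,0], mem_e0⟩⟩

lemma mem_pair {a b : ℝ} (ha : 0 ≤ a) (hb : 0 ≤ b) (hab : a + b = 1) :
    (![a,b] : Fin 2 → ℝ) ∈ stdSimplex ℝ (Fin 2) :=
  ⟨fun i => by fin_cases i <;> simpa, by simpa [Fin.sum_univ_two]⟩

lemma sup2 (a b : ℝ) :
    (⨆ s : stdSimplex ℝ (Fin 2), ((s : Fin 2 → ℝ) 0 * a + (s : Fin 2 → ℝ) 1 * b)) = max a b := by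
  have bound : ∀ s : stdSimplex ℝ (Fin 2),
      (s : Fin 2 → ℝ) 0 * a + (s : Fin 2 → ℝ) 1 * b ≤ max a b := by
    intro s
    have h0 := s.2.1 0; have h1 := s.2.1 1
    have hsum : (s : Fin 2 → ℝ) 0 + (s : Fin 2 → ℝ) 1 = 1 := by
      exact stdSimplex.add_eq_one s
    calc (s : Fin 2 → ℝ) 0 * a + (s : Fin 2 → ℝ) 1 * b
        ≤ (s : Fin 2 → ℝ) 0 * max a b + (s : Fin 2 → ℝ) 1 * max a b :=
          add_le_add (mul_le_mul_of_nonneg_left (le_max_left a b) h0)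
            (mul_le_mul_of_nonneg_left (le_max_right a b) h1)
      _ = ((s : Fin 2 → ℝ) 0 + (s : Fin 2 → ℝ) 1) * max a b := by ring
      _ = max a b := by rw [hsum, one_mul]
  have hbdd : BddAbove (Set.range fun s : stdSimplex ℝ (Fin 2) =>
      (s : Fin 2 → ℝ) 0 * a + (s : Fin 2 → ℝ) 1 * b) := ⟨max a b, by rintro y ⟨s, rfl⟩; exact bound s⟩
  refine le_antisymm (ciSup_le bound) ?_
  rcases le_total a b with h | h
  · have := le_ciSup hbdd (⟨![0,1], mem_e1⟩ : stdSimplex ℝ (Fin 2))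
    simp only [max_eq_right h]
    calc b = (![0,1] : Fin 2 → ℝ) 0 * a + (![0,1] : Fin 2 → ℝ) 1 * b := by norm_num
    _ ≤ _ := this
  · have := le_ciSup hbdd (⟨![1,0], mem_e0⟩ : stdSimplex ℝ (Fin 2))
    simp only [max_eq_left h]
    calc a = (![1,0] : Fin 2 → ℝ) 0 * a + (![1,0] : Fin 2 → ℝ) 1 * b := by norm_num
    _ ≤ _ := this

lemma ve_eq_inf (q : Fin 2 → ℝ) :
    ve Mex14 q = ⨅ t : stdSimplex ℝ (Fin 2),
      max (-(q 1) * (t : Fin 2 → ℝ) 0) (-(q 0) * (t : Fin 2 → ℝ) 1) := by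
  unfold ve matrixValue
  refine iInf_congr fun t => ?_
  rw [← sup2]
  refine iSup_congr fun s => ?_
  simp [Fin.sum_univ_two, Mex14]
  ring

lemma ve_simplex (q : Fin 2 → ℝ) (hq : q ∈ stdSimplex ℝ (Fin 2)) :
    ve Mex14 q = -(q 0 * q 1) := by
  rw [ve_eq_inf]
  have hq0 := hq.1 0; have hq1 := hq.1 1
  have hqs : q 0 + q 1 = 1 := by simpa [Fin.sum_univ_two] using hq.2
  have bound : ∀ t : stdSimplex ℝ (Fin 2),
      -(q 0 * q 1) ≤ max (-(q 1) * (t : Fin 2 → ℝ) 0) (-(q 0) * (t : Fin 2 → ℝ) 1) := by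
    intro t
    have h0 := t.2.1 0; have h1 := t.2.1 1
    have hsum : (t : Fin 2 → ℝ) 0 + (t : Fin 2 → ℝ) 1 = 1 := by
      exact stdSimplex.add_eq_one t
    rcases le_total ((t : Fin 2 → ℝ) 0) (q 0) with h | h
    · exact le_max_of_le_left (by nlinarith)
    · exact le_max_of_le_right (by nlinarith)
  have hbdd : BddBelow (Set.range fun t : stdSimplex ℝ (Fin 2) =>
      max (-(q 1) * (t : Fin 2 → ℝ) 0) (-(q 0) * (t : Fin 2 → ℝ) 1)) :=
    ⟨-(q 0 * q 1), by rintro y ⟨t, rfl⟩; exact bound t⟩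
  refine le_antisymm ?_ (le_ciInf bound)
  have := ciInf_le hbdd (⟨q, hq⟩ : stdSimplex ℝ (Fin 2))
  refine this.trans (le_of_eq ?_)
  have e1 : -(q 1) * q 0 = -(q 0 * q 1) := by ring
  have e2 : -(q 0) * q 1 = -(q 0 * q 1) := by ring
  show max (-(q 1) * q 0) (-(q 0) * q 1) = _
  rw [e1, e2, max_self]

lemma ve_deg (q : Fin 2 → ℝ) (h0 : q 0 ≤ 0) (h1 : 0 ≤ q 1) : ve Mex14 q = 0 := by
  rw [ve_eq_inf]
  have bound : ∀ t : stdSimplex ℝ (Fin 2),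
      (0:ℝ) ≤ max (-(q 1) * (t : Fin 2 → ℝ) 0) (-(q 0) * (t : Fin 2 → ℝ) 1) :=
    fun t => le_max_of_le_right (mul_nonneg (by linarith) (t.2.1 1))
  have hbdd : BddBelow (Set.range fun t : stdSimplex ℝ (Fin 2) =>
      max (-(q 1) * (t : Fin 2 → ℝ) 0) (-(q 0) * (t : Fin 2 → ℝ) 1)) :=
    ⟨0, by rintro y ⟨t, rfl⟩; exact bound t⟩
  refine le_antisymm ?_ (le_ciInf bound)
  have := ciInf_le hbdd (⟨![1,0], mem_e0⟩ : stdSimplex ℝ (Fin 2))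
  refine this.trans (le_of_eq ?_)
  show max (-(q 1) * (![1,0] : Fin 2 → ℝ) 0) (-(q 0) * (![1,0] : Fin 2 → ℝ) 1) = 0
  simp only [Matrix.cons_val_zero, Matrix.cons_val_one, Matrix.head_cons, mul_one, mul_zero]
  exact max_eq_right (by linarith)

lemma ve_nonpos (q : Fin 2 → ℝ) (hq : q ∈ stdSimplex ℝ (Fin 2)) : ve Mex14 q ≤ 0 := by
  rw [ve_simplex q hq]
  have := mul_nonneg (hq.1 0) (hq.1 1); linarith

lemma zero_mem_cavset (p : Fin 2 → ℝ) :
    (0:ℝ) ∈ { y : ℝ | ∃ g : (Fin 2 → ℝ) → ℝ,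
      ConcaveOn ℝ (stdSimplex ℝ (Fin 2)) g ∧ (∀ q ∈ stdSimplex ℝ (Fin 2), ve Mex14 q ≤ g q) ∧ y = g p } :=
  ⟨fun _ => 0, concaveOn_const 0 (convex_stdSimplex ℝ (Fin 2)), fun q hq => ve_nonpos q hq, rfl⟩

lemma cav_le_zero (p : Fin 2 → ℝ) (hp : p ∈ stdSimplex ℝ (Fin 2)) : cav (ve Mex14) p ≤ 0 := by
  refine csInf_le ⟨ve Mex14 p, ?_⟩ (zero_mem_cavset p)
  rintro y ⟨g, hg, hmaj, rfl⟩; exact hmaj p hp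

lemma cav_e1 : cav (ve Mex14) ![0,1] = 0 := by
  refine le_antisymm (cav_le_zero _ mem_e1) (le_csInf ⟨0, zero_mem_cavset _⟩ ?_)
  rintro y ⟨g, hg, hmaj, rfl⟩
  have := hmaj _ mem_e1
  rw [ve_simplex _ mem_e1] at this
  simpa using this

lemma half_smul : ((1:ℝ)/2) • (![1,0] : Fin 2 → ℝ) + ((1:ℝ)/2) • (![0,1] : Fin 2 → ℝ) = ![1/2, 1/2] := by
  funext i; fin_cases i <;> norm_num

lemma cav_half : cav (ve Mex14) ![1/2,1/2] = 0 := by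
  refine le_antisymm (cav_le_zero _ (by apply mem_pair <;> norm_num)) (le_csInf ⟨0, zero_mem_cavset _⟩ ?_)
  rintro y ⟨g, hg, hmaj, rfl⟩
  have hcc := hg.2 mem_e0 mem_e1 (by norm_num : (0:ℝ) ≤ 1/2) (by norm_num : (0:ℝ) ≤ 1/2) (by norm_num)
  rw [half_smul] at hcc
  have h0 := hmaj _ mem_e0
  have h1 := hmaj _ mem_e1
  rw [ve_simplex _ mem_e0] at h0
  rw [ve_simplex _ mem_e1] at h1
  simp only [Matrix.cons_val_zero, Matrix.cons_val_one, Matrix.head_cons, mul_zero, mul_one,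
    zero_mul, neg_zero, smul_eq_mul] at h0 h1 hcc
  linarith

lemma rowS_eq : rowS 1 ![0,0] = fun _ : Fin 1 => (0:ℝ) := by
  funext i; fin_cases i; simp [rowS]

lemma Tinv_eq : Tinv (![0,1] : Fin 2 → ℝ) = fun _ : Fin 1 => (1:ℝ) := by
  funext i; fin_cases i; simp [Tinv]

lemma Tmap_zero (x : Fin 1 → ℝ) : Tmap 1 x 0 = 1 - x 0 := by
  simp [Tmap, Fin.sum_univ_one]

lemma Tmap_one (x : Fin 1 → ℝ) : Tmap 1 x 1 = x 0 := rfl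

lemma f_zero (x : Fin 1 → ℝ) (hx : 1 ≤ x 0) : ve Mex14 (Tmap 1 x) = 0 :=
  ve_deg _ (by rw [Tmap_zero]; linarith) (by rw [Tmap_one]; linarith)

lemma clarke_mem :
    rowS 1 ![0,0] ∈ clarkeGrad (fun x => ve Mex14 (Tmap 1 x)) (Tinv ![0,1]) := by
  apply subset_convexHull
  set f : (Fin 1 → ℝ) → ℝ := fun x => ve Mex14 (Tmap 1 x) with hf
  refine ⟨fun m => fun _ => 1 + 1/(m+1), ?_, ?_, ?_⟩
  · intro m
    have hmem : {x : Fin 1 → ℝ | 1 < x 0} ∈ nhds (fun _ : Fin 1 => 1 + 1/((m:ℝ)+1)) := by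
      refine (isOpen_lt continuous_const (continuous_apply 0)).mem_nhds ?_
      show (1:ℝ) < 1 + 1/((m:ℝ)+1)
      have : (0:ℝ) < 1/((m:ℝ)+1) := by positivity
      linarith
    have hEq : f =ᶠ[nhds (fun _ : Fin 1 => 1 + 1/((m:ℝ)+1))] fun _ => (0:ℝ) :=
      Filter.eventually_of_mem hmem fun x hx => f_zero x (le_of_lt hx)
    exact (Filter.EventuallyEq.differentiableAt_iff hEq).mpr (differentiableAt_const 0)
  · rw [Tinv_eq]
    refine tendsto_pi_nhds.mpr fun i => ?_
    have h := tendsto_one_div_add_atTop_nhds_zero_nat (𝕜 := ℝ)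
    have := h.const_add (1:ℝ)
    simpa using this
  · have key : ∀ m : ℕ, grad f (fun _ : Fin 1 => 1 + 1/((m:ℝ)+1)) = rowS 1 ![0,0] := by
      intro m
      have hmem : {x : Fin 1 → ℝ | 1 < x 0} ∈ nhds (fun _ : Fin 1 => 1 + 1/((m:ℝ)+1)) := by
        refine (isOpen_lt continuous_const (continuous_apply 0)).mem_nhds ?_
        show (1:ℝ) < 1 + 1/((m:ℝ)+1)
        have : (0:ℝ) < 1/((m:ℝ)+1) := by positivity
        linarith
      have hEq : f =ᶠ[nhds (fun _ : Fin 1 => 1 + 1/((m:ℝ)+1))] fun _ => (0:ℝ) :=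
        Filter.eventually_of_mem hmem fun x hx => f_zero x (le_of_lt hx)
      funext i
      rw [rowS_eq]
      show fderiv ℝ f _ (Pi.single i 1) = 0
      rw [Filter.EventuallyEq.fderiv_eq hEq, fderiv_fun_const]
      simp
    refine Filter.Tendsto.congr (fun m => (key m).symm) tendsto_const_nhds

lemma supdiff_mem : rowS 1 ![0,0] ∈ restrictedSuperdiff (cav (ve Mex14)) ![0,1] := by
  intro h hmem
  rw [cav_e1, rowS_eq]
  simpa using cav_le_zero _ hmem

end Stmt14Aux

open Stmt14Aux in

/-- for the game `Mex14` with prior `p⁰ = (1/2, 1/2)`: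
(i) `φ = (0,0)` belongs to `NR(p⁰)`; (ii) the game satisfies property NR at `p⁰`,
witnessed by the boundary point `p = (0,1)` and `φ = (0,0)`; and the game is not
locally non-revealing at `p⁰`. -/
theorem stmt_14 :
    (![0, 0] : Fin (1 + 1) → ℝ) ∈ NRset Mex14 ![1/2, 1/2] ∧
    ((cav (ve Mex14) ![0, 1] = ve Mex14 ![0, 1] ∧
      ve Mex14 ![0, 1] = ∑ k, (![0, 0] : Fin (1 + 1) → ℝ) k * (![0, 1] : Fin (1 + 1) → ℝ) k ∧
      cav (ve Mex14) ![1/2, 1/2]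
        = ∑ k, (![0, 0] : Fin (1 + 1) → ℝ) k * (![1/2, 1/2] : Fin (1 + 1) → ℝ) k) ∧
     rowS 1 ![0, 0] ∈ clarkeGrad (fun x => ve Mex14 (Tmap 1 x)) (Tinv ![0, 1]) ∧
     rowS 1 ![0, 0] ∈ restrictedSuperdiff (cav (ve Mex14)) ![0, 1]) ∧
    propNR Mex14 ![1/2, 1/2] ∧
    ¬ locallyNR Mex14 ![1/2, 1/2] := by
  have hveE1 : ve Mex14 ![0,1] = 0 := by
    rw [ve_simplex _ mem_e1]; norm_num
  have hsum0 : ∀ p : Fin 2 → ℝ, (∑ k, (![0, 0] : Fin (1 + 1) → ℝ) k * p k) = 0 := by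
    intro p; simp [Fin.sum_univ_two]
  have part2 : (cav (ve Mex14) ![0, 1] = ve Mex14 ![0, 1] ∧
      ve Mex14 ![0, 1] = ∑ k, (![0, 0] : Fin (1 + 1) → ℝ) k * (![0, 1] : Fin (1 + 1) → ℝ) k ∧
      cav (ve Mex14) ![1/2, 1/2]
        = ∑ k, (![0, 0] : Fin (1 + 1) → ℝ) k * (![1/2, 1/2] : Fin (1 + 1) → ℝ) k) ∧
     rowS 1 ![0, 0] ∈ clarkeGrad (fun x => ve Mex14 (Tmap 1 x)) (Tinv ![0, 1]) ∧
     rowS 1 ![0, 0] ∈ restrictedSuperdiff (cav (ve Mex14)) ![0, 1] := by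
    refine ⟨⟨cav_e1.trans hveE1.symm, hveE1.trans (hsum0 _).symm,
      cav_half.trans (hsum0 _).symm⟩, clarke_mem, supdiff_mem⟩
  refine ⟨?_, part2, ⟨![0,1], mem_e1, ![0,0], part2.1, part2.2.1, part2.2.2⟩, ?_⟩
  · refine ⟨fun q hq => ?_, (hsum0 _).trans cav_half.symm, ?_⟩
    · rw [hsum0 q]; exact ve_nonpos q hq
    · exact subset_convexHull ℝ _ ⟨0, 1, by funext k; fin_cases k <;> simp [Mex14]⟩
  · rintro ⟨m, α, ps, hα, hαs, hps, hsum, hcav, i0, hi0⟩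
    rw [cav_half] at hcav
    have hlt : ∑ i, α i * ve Mex14 (ps i) < 0 := by
      have hle : ∀ i ∈ Finset.univ, α i * ve Mex14 (ps i) ≤ (fun _ : Fin m => (0:ℝ)) i :=
        fun i _ => mul_nonpos_iff.mpr (Or.inl ⟨(hα i).le, ve_nonpos _ (hps i)⟩)
      have hstrict : α i0 * ve Mex14 (ps i0) < (fun _ : Fin m => (0:ℝ)) i0 := by
        have hv : ve Mex14 (ps i0) < 0 := by
          rw [ve_simplex _ (hps i0)]
          have := mul_pos (hi0 0) (hi0 1); linarith
        exact mul_neg_of_pos_of_neg (hα i0) hv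
      have := Finset.sum_lt_sum hle ⟨i0, Finset.mem_univ _, hstrict⟩
      simpa using this
    linarith
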